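/- For every integer θ ≥ 2 and every real λ > 0, lim_{b→∞} b^{θ/(θ−1)} · p_c^MF(b,θ,λ) = (θ!/λ)^{1/(θ−1)}, where the limit is taken over integers b → ∞. -/

import Mathlib

set_option maxHeartbeats 1000000

open Filter

/-- Bin(κ,x,θ) = ∑_{i=θ}^{κ} (κ choose i) x^i (1−x)^{κ−i}. -/
noncomputable def binTail (κ : ℕ) (x : ℝ) (θ : ℕ) : ℝ :=
  ∑ i ∈ Finset.Icc θ κ, (κ.choose i : ℝ) * x ^ i * (1 - x) ^ (κ - i)

/-- H(κ,θ,λ;x) = −1 + λ·((1−x)/x)·Bin(κ,x,θ). -/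
noncomputable def Hmf (κ θ : ℕ) (lam x : ℝ) : ℝ :=
  -1 + lam * ((1 - x) / x) * binTail κ x θ

/-- p_c^MF(κ,θ,λ) = inf{x ∈ (0,1] : H(κ,θ,λ;x) ≥ 0}. -/
noncomputable def pcMF (κ θ : ℕ) (lam : ℝ) : ℝ :=
  sInf {x ∈ Set.Ioc (0:ℝ) 1 | 0 ≤ Hmf κ θ lam x}

/-! ### Auxiliary lemmas -/

/-- Union-bound style upper bound for the binomial tail. -/
lemma binTail_le_choose (κ θ : ℕ) {x : ℝ} (hx0 : 0 ≤ x) (hx1 : x ≤ 1) :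
    binTail κ x θ ≤ (κ.choose θ : ℝ) * x ^ θ := by
  rcases le_or_gt θ κ with h | h
  · have h1x : (0:ℝ) ≤ 1 - x := by linarith
    have key : ∀ j ∈ Finset.range (κ + 1 - θ),
        (κ.choose (θ + j) : ℝ) * x ^ (θ + j) * (1 - x) ^ (κ - (θ + j))
          ≤ (κ.choose θ : ℝ) * x ^ θ *
            (x ^ j * (1 - x) ^ (κ - θ - j) * ((κ - θ).choose j : ℝ)) := by
      intro j hj
      have hjκ : θ + j ≤ κ := by
        simp only [Finset.mem_range] at hj; omega
      have hmul := Nat.choose_mul (n := κ) (k := θ + j) (s := θ) (Nat.le_add_right _ _)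
      have hpos : 1 ≤ (θ + j).choose θ := Nat.choose_pos (Nat.le_add_right _ _)
      have hc : κ.choose (θ + j) ≤ κ.choose θ * (κ - θ).choose j := by
        calc κ.choose (θ + j) = κ.choose (θ + j) * 1 := (Nat.mul_one _).symm
          _ ≤ κ.choose (θ + j) * (θ + j).choose θ := Nat.mul_le_mul_left _ hpos
          _ = κ.choose θ * (κ - θ).choose ((θ + j) - θ) := hmul
          _ = κ.choose θ * (κ - θ).choose j := by congr 2; omega
      have hcR : (κ.choose (θ + j) : ℝ) ≤ (κ.choose θ : ℝ) * ((κ - θ).choose j : ℝ) := by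
        exact_mod_cast hc
      have hsub : κ - (θ + j) = κ - θ - j := by omega
      have hnn : (0:ℝ) ≤ x ^ (θ + j) * (1 - x) ^ (κ - θ - j) := by positivity
      calc (κ.choose (θ + j) : ℝ) * x ^ (θ + j) * (1 - x) ^ (κ - (θ + j))
          = (κ.choose (θ + j) : ℝ) * (x ^ (θ + j) * (1 - x) ^ (κ - θ - j)) := by
            rw [hsub]; ring
        _ ≤ ((κ.choose θ : ℝ) * ((κ - θ).choose j : ℝ)) *
              (x ^ (θ + j) * (1 - x) ^ (κ - θ - j)) :=
            mul_le_mul_of_nonneg_right hcR hnn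
        _ = (κ.choose θ : ℝ) * x ^ θ *
              (x ^ j * (1 - x) ^ (κ - θ - j) * ((κ - θ).choose j : ℝ)) := by
            rw [pow_add]; ring
    have hrg : κ + 1 - θ = (κ - θ) + 1 := by omega
    calc binTail κ x θ
        = ∑ j ∈ Finset.range (κ + 1 - θ),
            (κ.choose (θ + j) : ℝ) * x ^ (θ + j) * (1 - x) ^ (κ - (θ + j)) := by
          simp only [binTail]
          rw [← Finset.Ico_add_one_right_eq_Icc, Finset.sum_Ico_eq_sum_range]
      _ ≤ ∑ j ∈ Finset.range (κ + 1 - θ),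
            (κ.choose θ : ℝ) * x ^ θ *
              (x ^ j * (1 - x) ^ (κ - θ - j) * ((κ - θ).choose j : ℝ)) :=
          Finset.sum_le_sum key
      _ = (κ.choose θ : ℝ) * x ^ θ *
            ∑ j ∈ Finset.range ((κ - θ) + 1),
              x ^ j * (1 - x) ^ ((κ - θ) - j) * ((κ - θ).choose j : ℝ) := by
          rw [← Finset.mul_sum, hrg]
      _ = (κ.choose θ : ℝ) * x ^ θ * (x + (1 - x)) ^ (κ - θ) := by
          rw [add_pow]
      _ = (κ.choose θ : ℝ) * x ^ θ := by norm_num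
  · simp only [binTail]
    rw [Finset.Icc_eq_empty (by omega), Finset.sum_empty,
      Nat.choose_eq_zero_of_lt h]
    norm_num

/-- Single-term lower bound for the binomial tail. -/
lemma choose_le_binTail (κ θ : ℕ) (hθκ : θ ≤ κ) {x : ℝ} (hx0 : 0 ≤ x) (hx1 : x ≤ 1) :
    (κ.choose θ : ℝ) * x ^ θ * (1 - x) ^ (κ - θ) ≤ binTail κ x θ := by
  have h1x : (0:ℝ) ≤ 1 - x := by linarith
  exact Finset.single_le_sum (f := fun i => (κ.choose i : ℝ) * x ^ i * (1 - x) ^ (κ - i))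
    (fun i _ => by positivity) (Finset.mem_Icc.2 ⟨le_refl θ, hθκ⟩)

lemma theta_sub_one_pos {θ : ℕ} (hθ : 2 ≤ θ) : (0:ℝ) < (θ:ℝ) - 1 := by
  have : (2:ℝ) ≤ (θ:ℝ) := by exact_mod_cast hθ
  linarith

lemma cast_theta_sub_one {θ : ℕ} (hθ : 2 ≤ θ) : ((θ - 1 : ℕ) : ℝ) = (θ:ℝ) - 1 := by
  have h1 : 1 ≤ θ := by omega
  push_cast [Nat.cast_sub h1]
  ring

/-- Key rpow computation:
`(t · A · b^{-θ/(θ-1)})^{θ-1} · b^θ = t^{θ-1} · (θ!/λ)`. -/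
lemma pow_calc (θ : ℕ) (hθ : 2 ≤ θ) (lam : ℝ) (hlam : 0 < lam) (b : ℕ) (hb : 1 ≤ b)
    (t : ℝ) :
    (t * ((θ.factorial : ℝ) / lam) ^ (1 / ((θ:ℝ) - 1)) *
        (b : ℝ) ^ (-((θ:ℝ) / ((θ:ℝ) - 1)))) ^ (θ - 1) * (b : ℝ) ^ θ
      = t ^ (θ - 1) * ((θ.factorial : ℝ) / lam) := by
  have hθ1 : (0:ℝ) < (θ:ℝ) - 1 := theta_sub_one_pos hθ
  have hA0 : (0:ℝ) < (θ.factorial : ℝ) / lam := by positivity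
  have hb0 : (0:ℝ) < (b:ℝ) := by exact_mod_cast Nat.pos_of_ne_zero (by omega)
  have hcast := cast_theta_sub_one hθ
  have e1 : (((θ.factorial : ℝ) / lam) ^ (1 / ((θ:ℝ) - 1))) ^ (θ - 1)
      = (θ.factorial : ℝ) / lam := by
    rw [← Real.rpow_natCast (((θ.factorial : ℝ) / lam) ^ (1 / ((θ:ℝ) - 1))) (θ - 1),
      ← Real.rpow_mul hA0.le, hcast, one_div, inv_mul_cancel₀ (ne_of_gt hθ1),
      Real.rpow_one]
  have e2 : ((b : ℝ) ^ (-((θ:ℝ) / ((θ:ℝ) - 1)))) ^ (θ - 1) * (b : ℝ) ^ θ = 1 := by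
    rw [← Real.rpow_natCast ((b : ℝ) ^ (-((θ:ℝ) / ((θ:ℝ) - 1)))) (θ - 1),
      ← Real.rpow_natCast (b:ℝ) θ, ← Real.rpow_mul hb0.le, ← Real.rpow_add hb0, hcast]
    have hz : -((θ:ℝ) / ((θ:ℝ) - 1)) * ((θ:ℝ) - 1) + (θ:ℝ) = 0 := by
      field_simp
      ring
    rw [hz, Real.rpow_zero]
  calc (t * ((θ.factorial : ℝ) / lam) ^ (1 / ((θ:ℝ) - 1)) *
        (b : ℝ) ^ (-((θ:ℝ) / ((θ:ℝ) - 1)))) ^ (θ - 1) * (b : ℝ) ^ θ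
      = t ^ (θ - 1) * ((((θ.factorial : ℝ) / lam) ^ (1 / ((θ:ℝ) - 1))) ^ (θ - 1)) *
          (((b : ℝ) ^ (-((θ:ℝ) / ((θ:ℝ) - 1)))) ^ (θ - 1) * (b : ℝ) ^ θ) := by
        rw [mul_pow, mul_pow]; ring
    _ = t ^ (θ - 1) * ((θ.factorial : ℝ) / lam) := by rw [e1, e2, mul_one]

lemma scale_calc (θ : ℕ) (b : ℕ) (hb : 1 ≤ b) (C : ℝ) :
    (b : ℝ) ^ ((θ:ℝ) / ((θ:ℝ) - 1)) *
      (C * (b : ℝ) ^ (-((θ:ℝ) / ((θ:ℝ) - 1)))) = C := by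
  have hb0 : (0:ℝ) < (b:ℝ) := by exact_mod_cast Nat.pos_of_ne_zero (by omega)
  have key : (b : ℝ) ^ ((θ:ℝ) / ((θ:ℝ) - 1)) *
      (b : ℝ) ^ (-((θ:ℝ) / ((θ:ℝ) - 1))) = 1 := by
    rw [← Real.rpow_add hb0, add_neg_cancel, Real.rpow_zero]
  calc (b : ℝ) ^ ((θ:ℝ) / ((θ:ℝ) - 1)) *
      (C * (b : ℝ) ^ (-((θ:ℝ) / ((θ:ℝ) - 1))))
      = C * ((b : ℝ) ^ ((θ:ℝ) / ((θ:ℝ) - 1)) *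
          (b : ℝ) ^ (-((θ:ℝ) / ((θ:ℝ) - 1)))) := by ring
    _ = C := by rw [key, mul_one]

/-- Every point of the admissible set lies above `A · b^{-θ/(θ-1)}`. -/
lemma pc_lower (θ : ℕ) (hθ : 2 ≤ θ) (lam : ℝ) (hlam : 0 < lam) (b : ℕ) (hb : θ ≤ b)
    (x : ℝ) (hx : x ∈ {x ∈ Set.Ioc (0:ℝ) 1 | 0 ≤ Hmf b θ lam x}) :
    ((θ.factorial : ℝ) / lam) ^ (1 / ((θ:ℝ) - 1)) *
      (b : ℝ) ^ (-((θ:ℝ) / ((θ:ℝ) - 1))) ≤ x := by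
  obtain ⟨⟨hx0, hx1⟩, hH⟩ := hx
  by_contra hcon
  push_neg at hcon
  have hb1 : 1 ≤ b := by omega
  have hb0 : (0:ℝ) < (b:ℝ) := by exact_mod_cast Nat.pos_of_ne_zero (by omega)
  set c : ℝ := ((θ.factorial : ℝ) / lam) ^ (1 / ((θ:ℝ) - 1)) *
      (b : ℝ) ^ (-((θ:ℝ) / ((θ:ℝ) - 1))) with hc
  have hA0 : (0:ℝ) < ((θ.factorial : ℝ) / lam) ^ (1 / ((θ:ℝ) - 1)) :=
    Real.rpow_pos_of_pos (by positivity) _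
  have hcpos : (0:ℝ) < c := mul_pos hA0 (Real.rpow_pos_of_pos hb0 _)
  have hbθpos : (0:ℝ) < (b:ℝ) ^ θ := by positivity
  -- c^(θ-1) * b^θ = θ!/lam
  have hcalc : c ^ (θ - 1) * (b:ℝ) ^ θ = (θ.factorial : ℝ) / lam := by
    rw [hc]
    have h := pow_calc θ hθ lam hlam b hb1 1
    rw [one_mul, one_pow, one_mul] at h
    exact h
  have hbin := binTail_le_choose b θ hx0.le hx1
  have hCb : (θ.factorial : ℝ) * (b.choose θ : ℝ) ≤ (b:ℝ) ^ θ := by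
    have h1 : θ.factorial * b.choose θ ≤ b ^ θ := by
      rw [← Nat.descFactorial_eq_factorial_mul_choose]
      exact Nat.descFactorial_le_pow b θ
    exact_mod_cast h1
  have hfac : (0:ℝ) ≤ lam * ((1 - x) / x) := by
    have h2 : (0:ℝ) ≤ (1 - x) / x := div_nonneg (by linarith) hx0.le
    positivity
  have h1 : Hmf b θ lam x ≤ -1 + lam * (b.choose θ : ℝ) * x ^ (θ - 1) := by
    have step : lam * ((1 - x) / x) * binTail b x θ
        ≤ lam * ((1 - x) / x) * ((b.choose θ : ℝ) * x ^ θ) :=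
      mul_le_mul_of_nonneg_left hbin hfac
    have hxθ : x ^ θ = x * x ^ (θ - 1) := by
      rw [← pow_succ']; congr 1; omega
    have eqx : lam * ((1 - x) / x) * ((b.choose θ : ℝ) * x ^ θ)
        = lam * (b.choose θ : ℝ) * x ^ (θ - 1) * (1 - x) := by
      rw [hxθ]; field_simp
    rw [eqx] at step
    have hnn : (0:ℝ) ≤ lam * (b.choose θ : ℝ) * x ^ (θ - 1) := by positivity
    have hmono : lam * (b.choose θ : ℝ) * x ^ (θ - 1) * (1 - x)
        ≤ lam * (b.choose θ : ℝ) * x ^ (θ - 1) := by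
      nlinarith [mul_nonneg hnn hx0.le]
    simp only [Hmf]
    linarith
  have hxc : x ^ (θ - 1) < c ^ (θ - 1) :=
    pow_lt_pow_left₀ hcon hx0.le (by omega)
  have hCpos : (0:ℝ) < (b.choose θ : ℝ) := by
    exact_mod_cast Nat.choose_pos hb
  have h2 : lam * (b.choose θ : ℝ) * x ^ (θ - 1) < 1 := by
    have s1 : lam * (b.choose θ : ℝ) * x ^ (θ - 1)
        < lam * (b.choose θ : ℝ) * c ^ (θ - 1) :=
      mul_lt_mul_of_pos_left hxc (by positivity)
    have hcEq : c ^ (θ - 1) = (θ.factorial : ℝ) / lam / (b:ℝ) ^ θ := by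
      rw [eq_div_iff (ne_of_gt hbθpos)]
      exact hcalc
    have s2 : lam * (b.choose θ : ℝ) * c ^ (θ - 1) ≤ 1 := by
      rw [hcEq]
      have hEq : lam * (b.choose θ : ℝ) * ((θ.factorial : ℝ) / lam / (b:ℝ) ^ θ)
          = (θ.factorial : ℝ) * (b.choose θ : ℝ) / (b:ℝ) ^ θ := by
        field_simp
      rw [hEq, div_le_one hbθpos]
      exact hCb
    linarith
  linarith

/-! ### Main theorem -/

theorem stmt13 (θ : ℕ) (hθ : 2 ≤ θ) (lam : ℝ) (hlam : 0 < lam) :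
    Tendsto
      (fun b : ℕ => (b : ℝ) ^ ((θ : ℝ) / ((θ : ℝ) - 1)) * pcMF b θ lam)
      atTop
      (nhds (((θ.factorial : ℝ) / lam) ^ (1 / ((θ : ℝ) - 1)))) := by
  have hθ1 : (0:ℝ) < (θ:ℝ) - 1 := theta_sub_one_pos hθ
  have hθR : (2:ℝ) ≤ (θ:ℝ) := by exact_mod_cast hθ
  set p : ℝ := (θ:ℝ) / ((θ:ℝ) - 1) with hp
  set A : ℝ := ((θ.factorial : ℝ) / lam) ^ (1 / ((θ:ℝ) - 1)) with hA
  have hA0 : (0:ℝ) < A := Real.rpow_pos_of_pos (by positivity) _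
  have hp0 : 0 < p := by
    rw [hp]; exact div_pos (by linarith) hθ1
  have hp1 : 1 < p := by
    rw [hp, lt_div_iff₀ hθ1]; linarith
  -- Main bounds for each ε > 0
  have both : ∀ ε : ℝ, 0 < ε → ∀ᶠ b : ℕ in atTop,
      A ≤ (b : ℝ) ^ p * pcMF b θ lam ∧ (b : ℝ) ^ p * pcMF b θ lam ≤ (1 + ε) * A := by
    intro ε hε
    set u : ℕ → ℝ := fun b => (1 + ε) * A * (b:ℝ) ^ (-p) with hu
    have hrneg : Tendsto (fun b : ℕ => ((b:ℝ) ^ (-p))) atTop (nhds 0) := by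
      exact (tendsto_rpow_neg_atTop hp0).comp tendsto_natCast_atTop_atTop
    have hu0 : Tendsto u atTop (nhds 0) := by
      have h2 := hrneg.const_mul ((1 + ε) * A)
      rw [mul_zero] at h2
      exact h2
    have hbu : Tendsto (fun b : ℕ => (b:ℝ) * u b) atTop (nhds 0) := by
      have h : Tendsto (fun b : ℕ => (b:ℝ) ^ (1 - p)) atTop (nhds 0) := by
        rw [show (1:ℝ) - p = -(p - 1) by ring]
        exact (tendsto_rpow_neg_atTop (by linarith)).comp tendsto_natCast_atTop_atTop
      have h2 := h.const_mul ((1 + ε) * A)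
      rw [mul_zero] at h2
      apply h2.congr'
      filter_upwards [eventually_ge_atTop 1] with b hb
      have hb0 : (0:ℝ) < (b:ℝ) := by exact_mod_cast Nat.pos_of_ne_zero (by omega)
      have hsplit : (b:ℝ) ^ ((1:ℝ) - p) = (b:ℝ) * (b:ℝ) ^ (-p) := by
        rw [sub_eq_add_neg, Real.rpow_add hb0, Real.rpow_one]
      show (1 + ε) * A * (b:ℝ) ^ ((1:ℝ) - p) = (b:ℝ) * u b
      rw [hsplit, hu]
      ring
    have hq : Tendsto (fun b : ℕ => ((b + 1 - θ : ℕ) : ℝ) ^ θ / (b:ℝ) ^ θ)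
        atTop (nhds 1) := by
      have hρ : Tendsto (fun b : ℕ => ((b + 1 - θ : ℕ) : ℝ) / (b:ℝ)) atTop (nhds 1) := by
        have hform : Tendsto (fun b : ℕ => 1 + (1 - (θ:ℝ)) * (1 / (b:ℝ)))
            atTop (nhds 1) := by
          have h1 := tendsto_one_div_atTop_nhds_zero_nat.const_mul (1 - (θ:ℝ))
          rw [mul_zero] at h1
          have h2 := (tendsto_const_nhds : Tendsto (fun _ : ℕ => (1:ℝ)) atTop (nhds 1)).add h1
          rw [add_zero] at h2
          exact h2
        apply hform.congr'
        filter_upwards [eventually_ge_atTop θ] with b hb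
        have hb0 : (0:ℝ) < (b:ℝ) := by
          have : 0 < b := by omega
          exact_mod_cast this
        have hcast : ((b + 1 - θ : ℕ) : ℝ) = (b:ℝ) + 1 - (θ:ℝ) := by
          have hle : θ ≤ b + 1 := by omega
          push_cast [Nat.cast_sub hle]
          ring
        rw [hcast]
        field_simp
        ring
      have h2 := hρ.pow θ
      rw [one_pow] at h2
      apply h2.congr'
      filter_upwards [eventually_ge_atTop 1] with b hb
      rw [div_pow]
    -- D → (1+ε)^(θ-1) > 1
    have hD : Tendsto (fun b : ℕ => (1 + ε) ^ (θ - 1) *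
        (((b + 1 - θ : ℕ) : ℝ) ^ θ / (b:ℝ) ^ θ * (1 - (b:ℝ) * u b)))
        atTop (nhds ((1 + ε) ^ (θ - 1))) := by
      have hone : Tendsto (fun b : ℕ => ((b + 1 - θ : ℕ) : ℝ) ^ θ / (b:ℝ) ^ θ *
          (1 - (b:ℝ) * u b)) atTop (nhds 1) := by
        have hsub := (tendsto_const_nhds : Tendsto (fun _ : ℕ => (1:ℝ)) atTop (nhds 1)).sub hbu
        rw [sub_zero] at hsub
        have h3 := hq.mul hsub
        rw [mul_one] at h3
        exact h3
      have h4 := hone.const_mul ((1 + ε) ^ (θ - 1) : ℝ)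
      rw [mul_one] at h4
      exact h4
    have hgt : (1:ℝ) < (1 + ε) ^ (θ - 1) :=
      one_lt_pow₀ (by linarith) (by omega)
    have hmem : ∀ᶠ b : ℕ in atTop,
        u b ∈ {x ∈ Set.Ioc (0:ℝ) 1 | 0 ≤ Hmf b θ lam x} := by
      filter_upwards [eventually_ge_atTop (θ + 1),
        hu0.eventually (eventually_le_nhds (by norm_num : (0:ℝ) < 1/2)),
        hbu.eventually (eventually_le_nhds (by norm_num : (0:ℝ) < 1)),
        hD.eventually (eventually_ge_nhds hgt)] with b hbθ hu12 hbu1 hD1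
      have hb1 : 1 ≤ b := by omega
      have hb0 : (0:ℝ) < (b:ℝ) := by exact_mod_cast Nat.pos_of_ne_zero (by omega)
      set x : ℝ := u b with hx
      have hxlit : x = (1 + ε) * A * (b:ℝ) ^ (-p) := by rw [hx, hu]
      have hx0 : 0 < x := by
        rw [hxlit]
        exact mul_pos (mul_pos (by linarith) hA0) (Real.rpow_pos_of_pos hb0 _)
      have hx1 : x ≤ 1 := by linarith
      simp only [Set.mem_setOf_eq, Set.mem_Ioc]
      refine ⟨⟨hx0, hx1⟩, ?_⟩
      -- Hmf ≥ 0 at x = u b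
      have hbin := choose_le_binTail b θ (by omega) hx0.le hx1
      have hfac : (0:ℝ) ≤ lam * ((1 - x) / x) := by
        have h2 : (0:ℝ) ≤ (1 - x) / x := div_nonneg (by linarith) hx0.le
        positivity
      have step1 : lam * ((1 - x) / x) * ((b.choose θ : ℝ) * x ^ θ * (1 - x) ^ (b - θ))
          ≤ lam * ((1 - x) / x) * binTail b x θ :=
        mul_le_mul_of_nonneg_left hbin hfac
      have hxθ : x ^ θ = x * x ^ (θ - 1) := by
        rw [← pow_succ']; congr 1; omega
      have eq1 : lam * ((1 - x) / x) * ((b.choose θ : ℝ) * x ^ θ * (1 - x) ^ (b - θ))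
          = lam * (b.choose θ : ℝ) * x ^ (θ - 1) * (1 - x) ^ (b - θ + 1) := by
        rw [hxθ, pow_succ]
        field_simp
      have hcalc : x ^ (θ - 1) * (b:ℝ) ^ θ
          = (1 + ε) ^ (θ - 1) * ((θ.factorial : ℝ) / lam) := by
        rw [hxlit, hA, hp]
        exact pow_calc θ hθ lam hlam b hb1 (1 + ε)
      have hbθpos : (0:ℝ) < (b:ℝ) ^ θ := by positivity
      have hdesc : ((b + 1 - θ : ℕ) : ℝ) ^ θ ≤ (θ.factorial : ℝ) * (b.choose θ : ℝ) := by
        have hh : (b + 1 - θ) ^ θ ≤ θ.factorial * b.choose θ := by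
          rw [← Nat.descFactorial_eq_factorial_mul_choose]
          exact Nat.pow_sub_le_descFactorial b θ
        exact_mod_cast hh
      have hεnn : (0:ℝ) ≤ (1 + ε) ^ (θ - 1) := by positivity
      have step2 : (1 + ε) ^ (θ - 1) * (((b + 1 - θ : ℕ) : ℝ) ^ θ / (b:ℝ) ^ θ)
          ≤ lam * (b.choose θ : ℝ) * x ^ (θ - 1) := by
        have hxeq : x ^ (θ - 1)
            = (1 + ε) ^ (θ - 1) * ((θ.factorial : ℝ) / lam) / (b:ℝ) ^ θ := by
          rw [eq_div_iff (ne_of_gt hbθpos)]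
          exact hcalc
        rw [hxeq]
        calc (1 + ε) ^ (θ - 1) * (((b + 1 - θ : ℕ) : ℝ) ^ θ / (b:ℝ) ^ θ)
            = ((1 + ε) ^ (θ - 1) * ((b + 1 - θ : ℕ) : ℝ) ^ θ) / (b:ℝ) ^ θ := by
              ring
          _ ≤ ((1 + ε) ^ (θ - 1) * ((θ.factorial : ℝ) * (b.choose θ : ℝ))) / (b:ℝ) ^ θ := by
              gcongr
          _ = lam * (b.choose θ : ℝ) *
                ((1 + ε) ^ (θ - 1) * ((θ.factorial : ℝ) / lam) / (b:ℝ) ^ θ) := by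
              field_simp
      have step3 : 1 - (b:ℝ) * x ≤ (1 - x) ^ (b - θ + 1) := by
        have hBer := one_add_mul_le_pow (a := -x) (by linarith) (b - θ + 1)
        have hle : ((b - θ + 1 : ℕ) : ℝ) ≤ (b:ℝ) := by
          have hh : b - θ + 1 ≤ b := by omega
          exact_mod_cast hh
        have hstep : 1 - (b:ℝ) * x ≤ 1 + ((b - θ + 1 : ℕ) : ℝ) * (-x) := by
          nlinarith [hx0.le]
        calc 1 - (b:ℝ) * x ≤ 1 + ((b - θ + 1 : ℕ) : ℝ) * (-x) := hstep
          _ ≤ (1 + (-x)) ^ (b - θ + 1) := hBer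
          _ = (1 - x) ^ (b - θ + 1) := by rw [sub_eq_add_neg]
      have hrnn : (0:ℝ) ≤ 1 - (b:ℝ) * x := by linarith
      have hQnn : (0:ℝ) ≤ (1 + ε) ^ (θ - 1) * (((b + 1 - θ : ℕ) : ℝ) ^ θ / (b:ℝ) ^ θ) := by
        positivity
      have hPnn : (0:ℝ) ≤ lam * (b.choose θ : ℝ) * x ^ (θ - 1) := le_trans hQnn step2
      have hcomb : (1 + ε) ^ (θ - 1) *
          (((b + 1 - θ : ℕ) : ℝ) ^ θ / (b:ℝ) ^ θ * (1 - (b:ℝ) * x))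
            ≤ lam * (b.choose θ : ℝ) * x ^ (θ - 1) * (1 - x) ^ (b - θ + 1) := by
        have hmm := mul_le_mul step2 step3 hrnn hPnn
        calc (1 + ε) ^ (θ - 1) *
            (((b + 1 - θ : ℕ) : ℝ) ^ θ / (b:ℝ) ^ θ * (1 - (b:ℝ) * x))
            = (1 + ε) ^ (θ - 1) * (((b + 1 - θ : ℕ) : ℝ) ^ θ / (b:ℝ) ^ θ) *
                (1 - (b:ℝ) * x) := by ring
          _ ≤ lam * (b.choose θ : ℝ) * x ^ (θ - 1) * (1 - x) ^ (b - θ + 1) := hmm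
      have final : 1 ≤ lam * ((1 - x) / x) * binTail b x θ := by
        calc (1:ℝ) ≤ (1 + ε) ^ (θ - 1) *
            (((b + 1 - θ : ℕ) : ℝ) ^ θ / (b:ℝ) ^ θ * (1 - (b:ℝ) * x)) := hD1
          _ ≤ lam * (b.choose θ : ℝ) * x ^ (θ - 1) * (1 - x) ^ (b - θ + 1) := hcomb
          _ = lam * ((1 - x) / x) * ((b.choose θ : ℝ) * x ^ θ * (1 - x) ^ (b - θ)) :=
            eq1.symm
          _ ≤ lam * ((1 - x) / x) * binTail b x θ := step1
      simp only [Hmf]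
      linarith
    -- conclude the two-sided bound on b^p * pcMF
    filter_upwards [hmem, eventually_ge_atTop (θ + 1)] with b hub hbθ
    have hb1 : 1 ≤ b := by omega
    have hb0 : (0:ℝ) < (b:ℝ) := by exact_mod_cast Nat.pos_of_ne_zero (by omega)
    have hS_ne : {x ∈ Set.Ioc (0:ℝ) 1 | 0 ≤ Hmf b θ lam x}.Nonempty := ⟨u b, hub⟩
    have hbdd : BddBelow {x ∈ Set.Ioc (0:ℝ) 1 | 0 ≤ Hmf b θ lam x} :=
      ⟨0, fun x hx => hx.1.1.le⟩
    have hlow : A * (b:ℝ) ^ (-p) ≤ pcMF b θ lam :=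
      le_csInf hS_ne (fun x hx => pc_lower θ hθ lam hlam b (by omega) x hx)
    have hupp : pcMF b θ lam ≤ u b := csInf_le hbdd hub
    have hbp0 : (0:ℝ) ≤ (b:ℝ) ^ p := (Real.rpow_pos_of_pos hb0 p).le
    have hulit : u b = (1 + ε) * A * (b:ℝ) ^ (-p) := by rw [hu]
    constructor
    · have hh := mul_le_mul_of_nonneg_left hlow hbp0
      have hsc : (b:ℝ) ^ p * (A * (b:ℝ) ^ (-p)) = A := by
        rw [hp]; exact scale_calc θ b hb1 A
      linarith
    · have hh := mul_le_mul_of_nonneg_left hupp hbp0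
      have hsc : (b:ℝ) ^ p * ((1 + ε) * A * (b:ℝ) ^ (-p)) = (1 + ε) * A := by
        rw [hp]; exact scale_calc θ b hb1 ((1 + ε) * A)
      rw [hulit] at hh
      linarith
  -- ε-δ conclusion
  rw [Metric.tendsto_atTop]
  intro ε hε
  have hδ : 0 < ε / (2 * A) := by positivity
  obtain ⟨N, hN⟩ := eventually_atTop.mp (both (ε / (2 * A)) hδ)
  refine ⟨N, fun n hn => ?_⟩
  obtain ⟨h1, h2⟩ := hN n hn
  rw [Real.dist_eq, abs_of_nonneg (by linarith)]
  have heq : (1 + ε / (2 * A)) * A = A + ε / 2 := by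
    field_simp
  rw [heq] at h2
  linarith
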